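/- Let Λ = HahnSeries ℝ ℂ be the Novikov field and let f : ℝ →₀ Λ be a nonzero finitely supported function, regarded as the finite formal sum Σ_{r ∈ f.support} f(r)·z^r ∈ Λ[z^ℝ]. Then the set {t ∈ ℝ | Σ_{r ∈ f.support} f(r) · HahnSeries.single (t·r) 1 = 0} of real numbers t at which the specialization of f at z = T^t vanishes is finite. -/

import Mathlib

/-- The Novikov field `Λ = ℂ((T^ℝ))`, realized as Hahn series. -/
local notation "Λ" => HahnSeries ℝ ℂ

/-- **Finiteness of zeros of the specialization of a finite Novikov sum.**
If `f : ℝ →₀ Λ` is a nonzero finite formal sum `Σ_r f(r)·z^r ∈ Λ[z^ℝ]`, then the set of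
`t ∈ ℝ` at which the specialization `f(T^t) = Σ_r f(r)·T^{t·r}` vanishes is finite. -/
theorem finite_zeros_of_specialization (f : ℝ →₀ Λ) (hf : f ≠ 0) :
    {t : ℝ | ∑ r ∈ f.support, f r * HahnSeries.single (t * r) (1 : ℂ) = 0}.Finite := by
  have hsupp : f.support.Nonempty := Finsupp.support_nonempty_iff.mpr hf
  -- The zero set is contained in a finite union of subsingleton sets
  have key : {t : ℝ | ∑ r ∈ f.support, f r * HahnSeries.single (t * r) (1 : ℂ) = 0} ⊆
      ⋃ p ∈ (f.support ×ˢ f.support : Finset (ℝ × ℝ)),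
        {t : ℝ | p.1 ≠ p.2 ∧ (f p.1).order + t * p.1 = (f p.2).order + t * p.2} := by
    intro t ht
    simp only [Set.mem_setOf_eq] at ht
    -- suppose no two distinct exponents give equal valuations; derive a contradiction
    by_contra hcon
    simp only [Set.mem_iUnion, Set.mem_setOf_eq, not_exists, not_and, Finset.mem_product] at hcon
    have hinj : ∀ r ∈ f.support, ∀ s ∈ f.support,
        (f r).order + t * r = (f s).order + t * s → r = s := by
      intro r hr s hs hrs
      by_contra hne
      exact hcon (r, s) ⟨hr, hs⟩ hne hrs
    -- take the minimum valuation
    obtain ⟨r0, hr0, hmin⟩ := f.support.exists_min_image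
      (fun r => (f r).order + t * r) hsupp
    set v : ℝ := (f r0).order + t * r0 with hv
    have hzero := congrArg (HahnSeries.coeff.addMonoidHom v) ht
    rw [map_sum, map_zero] at hzero
    have hterm : ∀ r ∈ f.support,
        HahnSeries.coeff.addMonoidHom v (f r * HahnSeries.single (t * r) (1 : ℂ)) =
          if r = r0 then (f r0).coeff (f r0).order else 0 := by
      intro r hr
      have hcoeff : (f r * HahnSeries.single (t * r) (1 : ℂ)).coeff v =
          (f r).coeff (v - t * r) := by
        have h2 : v = (v - t * r) + t * r := by ring
        conv_lhs => rw [h2]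
        rw [HahnSeries.coeff_mul_single_add, mul_one]
      by_cases hrr : r = r0
      · subst hrr
        simp only [HahnSeries.coeff.addMonoidHom_apply, hcoeff, if_pos rfl]
        congr 1
        rw [hv]; ring
      · simp only [HahnSeries.coeff.addMonoidHom_apply, hcoeff, if_neg hrr]
        apply HahnSeries.coeff_eq_zero_of_lt_order
        have hle : v ≤ (f r).order + t * r := hmin r hr
        have hne : v ≠ (f r).order + t * r := by
          intro h
          exact hrr (hinj r hr r0 hr0 (by linarith))
        have : v < (f r).order + t * r := lt_of_le_of_ne hle hne
        linarith
    rw [Finset.sum_congr rfl hterm, Finset.sum_ite_eq' f.support r0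
      (fun _ => (f r0).coeff (f r0).order), if_pos hr0] at hzero
    exact (Finsupp.mem_support_iff.mp hr0) (HahnSeries.coeff_order_eq_zero.mp hzero)
  refine Set.Finite.subset (Set.Finite.biUnion (Finset.finite_toSet _) ?_) key
  intro p _
  apply Set.Subsingleton.finite
  intro a ha b hb
  simp only [Set.mem_setOf_eq] at ha hb
  obtain ⟨hne, hae⟩ := ha
  obtain ⟨_, hbe⟩ := hb
  have hp : p.1 - p.2 ≠ 0 := sub_ne_zero.mpr hne
  have : a * (p.1 - p.2) = b * (p.1 - p.2) := by ring_nf; ring_nf at hae hbe; linarith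
  exact mul_right_cancel₀ hp this
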